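/- arXiv:1305.6604 — 2 statements merged into one kernel-verified Lean document; each statement's English description precedes it below -/
import Mathlib

section
/- Every positive multiple of 4 is a local minimum of the negligibility function: for every j ≥ 1, p(4j − 1) ≥ p(4j) and p(4j) ≤ p(4j + 1). Moreover, if q is the degree position such that 4j has its least significant 1 in position q (so q ≥ 3), then p(4j) − p(4j − 1) = 2 − q(q−1)/2 ≤ 0. -/
/-- The negligibility of `m`: `p(m) = Σ_k (k+1)·m_k`, where `m_k` is the binary digit
of `m` at position `k ≥ 1` (least significant first). -/
def neg (m : ℕ) : ℕ := (((Nat.digits 2 m).zipIdx.map Prod.swap).map fun p => (p.1 + 2) * p.2).sum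

-- shifted sum
def S (k : ℕ) (l : List ℕ) : ℕ := (((l.zipIdx k).map Prod.swap).map fun p => (p.1 + 2) * p.2).sum

lemma S_succ (l : List ℕ) : ∀ k, S (k+1) l = S k l + l.sum := by
  induction l with
  | nil => intro k; simp [S]
  | cons a l ih =>
      intro k
      simp only [S, List.zipIdx_cons, Prod.swap_prod_mk, List.map_cons, List.sum_cons, List.sum_cons]
      have h1 := ih (k+1)
      have h2 := ih k
      simp only [S] at h1 h2
      rw [h1, h2]; ring

lemma neg_eq_S (m : ℕ) : neg m = S 0 (Nat.digits 2 m) := by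
  simp [neg, S]

lemma neg_two_mul (m : ℕ) : neg (2 * m) = neg m + (Nat.digits 2 m).sum := by
  rcases Nat.eq_zero_or_pos m with h | h
  · simp [h, neg]
  · have : Nat.digits 2 (2 * m) = 0 :: Nat.digits 2 m := by
      rw [Nat.digits_def' (by norm_num) (by omega)]
      congr 1
      · omega
      · congr 1; omega
    rw [neg_eq_S, this, neg_eq_S]
    simp only [S, List.zipIdx_cons, Prod.swap_prod_mk, List.map_cons, List.sum_cons]
    have := S_succ (Nat.digits 2 m) 0
    simp only [S] at this ⊢
    rw [this]; ring

lemma neg_two_mul_add_one (m : ℕ) :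
    neg (2 * m + 1) = neg m + (Nat.digits 2 m).sum + 2 := by
  have : Nat.digits 2 (2 * m + 1) = 1 :: Nat.digits 2 m := by
    rw [Nat.digits_def' (by norm_num) (by omega)]
    congr 1
    · omega
    · congr 1; omega
  rw [neg_eq_S, this, neg_eq_S]
  simp only [S, List.zipIdx_cons, Prod.swap_prod_mk, List.map_cons, List.sum_cons]
  have := S_succ (Nat.digits 2 m) 0
  simp only [S] at this ⊢
  rw [this]; ring

lemma dsum_two_mul (m : ℕ) : (Nat.digits 2 (2 * m)).sum = (Nat.digits 2 m).sum := by
  rcases Nat.eq_zero_or_pos m with h | h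
  · simp [h]
  · rw [Nat.digits_def' (by norm_num : (1:ℕ) < 2) (by omega)]
    have h1 : 2 * m % 2 = 0 := by omega
    have h2 : 2 * m / 2 = m := by omega
    rw [h1, h2]; simp

lemma dsum_two_mul_add_one (m : ℕ) :
    (Nat.digits 2 (2 * m + 1)).sum = (Nat.digits 2 m).sum + 1 := by
  rw [Nat.digits_def' (by norm_num : (1:ℕ) < 2) (by omega)]
  have h1 : (2 * m + 1) % 2 = 1 := by omega
  have h2 : (2 * m + 1) / 2 = m := by omega
  rw [h1, h2]; simp [Nat.add_comm]

lemma dsum_pow_mul (v t : ℕ) : (Nat.digits 2 (2 ^ v * t)).sum = (Nat.digits 2 t).sum := by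
  induction v with
  | zero => simp
  | succ v ih =>
      have : 2 ^ (v + 1) * t = 2 * (2 ^ v * t) := by ring
      rw [this, dsum_two_mul, ih]

lemma dsum_pred (v t : ℕ) (ht : Odd t) :
    (Nat.digits 2 (2 ^ v * t - 1)).sum = v + (Nat.digits 2 (t - 1)).sum := by
  obtain ⟨s, hs⟩ := ht
  induction v with
  | zero => simp
  | succ v ih =>
      have hpos : 1 ≤ 2 ^ v * t := by
        have : 1 ≤ 2 ^ v := Nat.one_le_two_pow
        nlinarith [Nat.one_le_iff_ne_zero.mpr (by omega : t ≠ 0)]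
      have : 2 ^ (v + 1) * t - 1 = 2 * (2 ^ v * t - 1) + 1 := by
        have : 2 ^ (v + 1) * t = 2 * (2 ^ v * t) := by ring
        omega
      rw [this, dsum_two_mul_add_one, ih]
      omega

lemma dsum_odd_pred (t : ℕ) (ht : Odd t) :
    (Nat.digits 2 t).sum = (Nat.digits 2 (t - 1)).sum + 1 := by
  obtain ⟨s, hs⟩ := ht
  subst hs
  rw [dsum_two_mul_add_one]
  have : 2 * s + 1 - 1 = 2 * s := by omega
  rw [this, dsum_two_mul]

lemma key (v t : ℕ) (ht : Odd t) :
    2 * neg (2 ^ v * t) + v * (v + 3) = 2 * neg (2 ^ v * t - 1) + 2 * (v + 2) := by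
  induction v with
  | zero =>
      obtain ⟨s, hs⟩ := ht
      subst hs
      simp only [pow_zero, one_mul]
      rw [neg_two_mul_add_one]
      have h1 : 2 * s + 1 - 1 = 2 * s := by omega
      rw [h1, neg_two_mul]
      ring
  | succ v ih =>
      obtain ⟨s, hs⟩ := ht
      have hpos : 1 ≤ 2 ^ v * t := by
        have : 1 ≤ 2 ^ v := Nat.one_le_two_pow
        nlinarith [Nat.one_le_iff_ne_zero.mpr (by omega : t ≠ 0)]
      have e1 : 2 ^ (v + 1) * t = 2 * (2 ^ v * t) := by ring
      have e2 : 2 * (2 ^ v * t) - 1 = 2 * (2 ^ v * t - 1) + 1 := by omega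
      rw [e1, e2, neg_two_mul, neg_two_mul_add_one, dsum_pow_mul,
        dsum_pred v t ⟨s, hs⟩, dsum_odd_pred t ⟨s, hs⟩]
      -- goal is linear in neg's and digit sums given ih... but has v*(v+3) nonlinear
      have expand : (v + 1) * (v + 1 + 3) = v * (v + 3) + 2 * v + 4 := by ring
      omega

/-- every positive multiple of 4 is a local minimum of the negligibility:
`p(4j − 1) ≥ p(4j)` and `p(4j) ≤ p(4j + 1)` for every `j ≥ 1`.  Moreover, if `q` is the
position of the least significant `1` in the binary expansion of `4j` (so `q ≥ 3`), then
`p(4j) − p(4j − 1) = 2 − q(q−1)/2 ≤ 0`. -/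
theorem mult_four_local_min (j : ℕ) (hj : 1 ≤ j) :
    (neg (4 * j - 1) ≥ neg (4 * j) ∧ neg (4 * j) ≤ neg (4 * j + 1)) ∧
    ∀ q : ℕ, q = (4 * j).factorization 2 + 1 →
      3 ≤ q ∧
      (neg (4 * j) : ℤ) - (neg (4 * j - 1) : ℤ) = 2 - (q * (q - 1)) / 2 ∧
      (neg (4 * j) : ℤ) - (neg (4 * j - 1) : ℤ) ≤ 0 := by
  have hne : 4 * j ≠ 0 := by omega
  set v := (4 * j).factorization 2 with hv
  set t := 4 * j / 2 ^ v with htdef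
  have hfac : 2 ^ v * t = 4 * j := Nat.ordProj_mul_ordCompl_eq_self (4 * j) 2
  have hodd : Odd t := by
    have h2 : ¬ 2 ∣ t := by
      rw [htdef, hv]; exact Nat.not_dvd_ordCompl Nat.prime_two hne
    exact Nat.odd_iff.mpr (by omega)
  have hv2 : 2 ≤ v := by
    rw [hv]
    exact (Nat.Prime.pow_dvd_iff_le_factorization Nat.prime_two hne).mp ⟨j, by ring⟩
  have hkey := key v t hodd
  rw [hfac] at hkey
  have hvv : 2 * (v + 2) + 2 ≤ v * (v + 3) := by nlinarith
  constructor
  · constructor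
    · omega
    · have e : 4 * j + 1 = 2 * (2 * j) + 1 := by ring
      have e2 : 4 * j = 2 * (2 * j) := by ring
      rw [e, e2, neg_two_mul, neg_two_mul_add_one]
      omega
  · intro q hq
    refine ⟨by omega, ?_, by push_cast; omega⟩
    obtain ⟨k, hk⟩ : ∃ k, v * (v + 1) = 2 * k := (Nat.even_mul_succ_self v).exists_two_nsmul _
    have hq1 : (q : ℤ) = v + 1 := by rw [hq]; push_cast; ring
    have hk' : (v : ℤ) * (v + 1) = 2 * k := by exact_mod_cast hk
    have hdiv : ((q : ℤ) * ((q : ℤ) - 1)) / 2 = (k : ℤ) := by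
      have h : (q : ℤ) * ((q : ℤ) - 1) = 2 * k := by
        rw [hq1]; linarith [hk']
      rw [h]; omega
    rw [hdiv]
    have hx : v * (v + 3) = v * (v + 1) + 2 * v := by ring
    push_cast
    omega
end

section
/- For a Paley-ordered Walsh index m of rank r = r(m), the Walsh function w_m annihilates all polynomials of degree less than r: for every integer 0 ≤ k < r, ∫_0^1 t^k w_m(t) dt = 0. -/
open Polynomial Finset MeasureTheory

/-- The rank of `m`: the number of ones in the binary expansion of `m`. -/
def rank (m : ℕ) : ℕ := (Nat.digits 2 m).sum

/-- The `m`'th Paley-ordered Walsh function on `[0,1]`: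
`w_m(t) = Π_k R_k(t)^{m_k}` where `m_k` is the binary digit of `m` at position `k ≥ 1`
(least significant first) and `R_k(t) = (−1)^{⌊2^k t⌋}` is the `k`'th Rademacher
function. -/
noncomputable def walsh (m : ℕ) (t : ℝ) : ℝ :=
  ∏ i ∈ Finset.range (Nat.digits 2 m).length,
    ((-1 : ℝ) ^ ⌊(2 : ℝ) ^ (i + 1) * t⌋) ^ ((Nat.digits 2 m).getD i 0)


lemma degree_taylor' (P : ℝ[X]) (h : ℝ) : (Polynomial.taylor h P).degree = P.degree := by
  rcases eq_or_ne P 0 with rfl | hP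
  · simp
  · have h1 : Polynomial.taylor h P ≠ 0 := fun hc => hP (Polynomial.taylor_injective h (by simpa using hc))
    rw [Polynomial.degree_eq_natDegree hP, Polynomial.degree_eq_natDegree h1,
      Polynomial.natDegree_taylor]

lemma hasse_top (P : ℝ[X]) : Polynomial.hasseDeriv P.natDegree P = Polynomial.C P.leadingCoeff := by
  ext n
  rw [Polynomial.hasseDeriv_coeff]
  cases n with
  | zero => rw [zero_add, Nat.choose_self, Nat.cast_one, one_mul, Polynomial.coeff_C_zero, Polynomial.leadingCoeff]
  | succ n =>
      rw [Polynomial.coeff_eq_zero_of_natDegree_lt (by omega), mul_zero, Polynomial.coeff_C]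
      simp

lemma taylor_leadingCoeff (P : ℝ[X]) (h : ℝ) :
    (Polynomial.taylor h P).leadingCoeff = P.leadingCoeff := by
  rcases eq_or_ne P 0 with rfl | hP
  · simp
  · rw [Polynomial.leadingCoeff, Polynomial.natDegree_taylor, Polynomial.taylor_coeff, hasse_top]
    rw [Polynomial.eval_C, Polynomial.leadingCoeff]

lemma degree_sub_taylor_lt (P : ℝ[X]) (h : ℝ) (n : ℕ) (hP : P.degree < n + 1) :
    (P - Polynomial.taylor h P).degree < n := by
  rcases eq_or_ne P 0 with rfl | h0
  · rw [map_zero, sub_zero, Polynomial.degree_zero]; exact WithBot.bot_lt_coe n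
  · have hd := Polynomial.degree_sub_lt (degree_taylor' P h).symm h0 (taylor_leadingCoeff P h).symm
    have h1 : P.degree ≤ (n : WithBot ℕ) := by
      rw [Polynomial.degree_eq_natDegree h0] at hP ⊢
      exact_mod_cast Nat.lt_succ_iff.mp (by exact_mod_cast hP)
    exact lt_of_lt_of_le hd h1

lemma key_s13 (N : ℕ) (S : Finset ℕ) (hS : S ⊆ Finset.range N) (P : ℝ[X])
    (hP : P.degree < S.card) :
    ∑ j ∈ Finset.range (2^N), (∏ i ∈ S, (-1:ℝ)^(j / 2^i)) * P.eval (j:ℝ) = 0 := by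
  induction N generalizing S P with
  | zero =>
      have hSe : S = ∅ := Finset.subset_empty.mp (by simpa using hS)
      subst hSe
      have hP0 : P = 0 := by
        by_contra h0
        rw [Polynomial.degree_eq_natDegree h0] at hP
        exact absurd hP (by simp)
      simp [hP0]
  | succ N ih =>
      have h2 : (0:ℕ) < 2 ^ N := pow_pos (by norm_num) _
      have hsplit : ∀ f : ℕ → ℝ, ∑ j ∈ Finset.range (2^(N+1)), f j
          = ∑ j ∈ Finset.range (2^N), f j + ∑ j ∈ Finset.range (2^N), f (2^N + j) := by
        intro f
        rw [pow_succ, mul_two, Finset.sum_range_add]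
      have hdiv : ∀ i ≤ N, ∀ j : ℕ, (2^N + j) / 2^i = 2^(N-i) + j / 2^i := by
        intro i hi j
        have : 2^N + j = j + 2^i * 2^(N-i) := by
          rw [pow_mul_pow_sub _ hi]; omega
        rw [this, Nat.add_mul_div_left _ _ (pow_pos (by norm_num) _)]; omega
      have hfac : ∀ i < N, ∀ j : ℕ, ((-1:ℝ))^((2^N + j) / 2^i) = (-1)^(j / 2^i) := by
        intro i hi j
        rw [hdiv i hi.le j, pow_add]
        have hev : Even (2^(N-i)) := (Nat.even_pow).mpr ⟨even_iff_two_dvd.mpr dvd_rfl, by omega⟩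
        rw [hev.neg_one_pow, one_mul]
      by_cases hN : N ∈ S
      · set S' := S.erase N with hS'
        have hNS' : N ∉ S' := Finset.notMem_erase _ _
        have hins : S = insert N S' := (Finset.insert_erase hN).symm
        have hS'sub : S' ⊆ Finset.range N := by
          intro i hi
          have h1 := hS (Finset.erase_subset _ _ hi)
          have h2 := Finset.ne_of_mem_erase hi
          rw [Finset.mem_range] at h1 ⊢; omega
        have hcard : S.card = S'.card + 1 := by
          rw [hS', Finset.card_erase_of_mem hN]
          have : 0 < S.card := Finset.card_pos.mpr ⟨N, hN⟩
          omega
        set Q : ℝ[X] := P - Polynomial.taylor ((2:ℝ)^N * 2^N / 2^N) P with hQ0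
        have hQ : Q = P - Polynomial.taylor ((2^N : ℕ) : ℝ) P := by
          rw [hQ0]; norm_num
        have key1 : ∀ j ∈ Finset.range (2^N),
            (∏ i ∈ S, (-1:ℝ)^(j / 2^i)) * P.eval (j:ℝ)
            + (∏ i ∈ S, (-1:ℝ)^((2^N + j) / 2^i)) * P.eval ((2^N + j : ℕ):ℝ)
            = (∏ i ∈ S', (-1:ℝ)^(j / 2^i)) * Q.eval (j:ℝ) := by
          intro j hj
          rw [Finset.mem_range] at hj
          have e1 : ∏ i ∈ S, (-1:ℝ)^(j / 2^i) = ∏ i ∈ S', (-1:ℝ)^(j / 2^i) := by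
            rw [hins, Finset.prod_insert hNS', Nat.div_eq_of_lt hj, pow_zero, one_mul]
          have e2 : ∏ i ∈ S, (-1:ℝ)^((2^N + j) / 2^i)
              = -∏ i ∈ S', (-1:ℝ)^(j / 2^i) := by
            rw [hins, Finset.prod_insert hNS']
            rw [hdiv N le_rfl j, Nat.sub_self, pow_zero, Nat.div_eq_of_lt hj,
              Finset.prod_congr rfl fun i hi => hfac i (Finset.mem_range.mp (hS'sub hi)) j]
            ring
          rw [e1, e2]
          simp only [hQ, Polynomial.eval_sub, Polynomial.taylor_eval]
          push_cast
          rw [add_comm ((2:ℝ)^N) (j:ℝ)]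
          ring
        rw [hsplit, ← Finset.sum_add_distrib, Finset.sum_congr rfl key1]
        refine ih S' hS'sub Q ?_
        rw [hQ]
        refine degree_sub_taylor_lt P _ S'.card ?_
        rw [hcard] at hP
        exact_mod_cast hP
      · have hsub : S ⊆ Finset.range N := by
          intro i hi
          have h1 := hS hi
          rw [Finset.mem_range] at h1 ⊢
          rcases Nat.lt_succ_iff_lt_or_eq.mp h1 with h | h
          · exact h
          · exact absurd (h ▸ hi) hN
        set Q : ℝ[X] := P + Polynomial.taylor ((2^N : ℕ) : ℝ) P with hQ
        have key2 : ∀ j ∈ Finset.range (2^N),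
            (∏ i ∈ S, (-1:ℝ)^(j / 2^i)) * P.eval (j:ℝ)
            + (∏ i ∈ S, (-1:ℝ)^((2^N + j) / 2^i)) * P.eval ((2^N + j : ℕ):ℝ)
            = (∏ i ∈ S, (-1:ℝ)^(j / 2^i)) * Q.eval (j:ℝ) := by
          intro j hj
          rw [Finset.prod_congr rfl fun i hi => hfac i (Finset.mem_range.mp (hsub hi)) j]
          simp only [hQ, Polynomial.eval_add, Polynomial.taylor_eval]
          push_cast
          rw [add_comm ((2:ℝ)^N) (j:ℝ)]
          ring
        rw [hsplit, ← Finset.sum_add_distrib, Finset.sum_congr rfl key2]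
        refine ih S hsub Q ?_
        refine lt_of_le_of_lt (Polynomial.degree_add_le _ _) (max_lt hP ?_)
        rw [degree_taylor']
        exact hP

lemma floor_div_pow (c j : ℕ) (x : ℝ) (h1 : (j:ℝ)/2^c ≤ x) (h2 : x < ((j:ℝ)+1)/2^c) :
    ⌊x⌋ = ((j / 2^c : ℕ) : ℤ) := by
  have hc : (0:ℝ) < 2^c := by positivity
  have hmod := Nat.div_add_mod j (2^c)
  have hlt : j % 2^c < 2^c := Nat.mod_lt _ (pow_pos (by norm_num) _)
  have key_s13 : j + 1 ≤ (j / 2^c + 1) * 2^c := by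
    calc j + 1 = 2^c * (j / 2^c) + j % 2^c + 1 := by rw [hmod]
      _ ≤ 2^c * (j / 2^c) + 2^c := by
          rw [add_assoc]
          exact Nat.add_le_add_left (Nat.succ_le_of_lt hlt) _
      _ = (j / 2^c + 1) * 2^c := by ring
  rw [Int.floor_eq_iff]
  constructor
  · refine le_trans ?_ h1
    rw [le_div_iff₀ hc]
    exact_mod_cast Nat.div_mul_le_self j (2^c)
  · refine lt_of_lt_of_le h2 ?_
    rw [div_le_iff₀ hc]
    exact_mod_cast key_s13

lemma walsh_eq_on (m : ℕ) (j : ℕ) (t : ℝ)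
    (h1 : (j:ℝ)/2^(Nat.digits 2 m).length ≤ t)
    (h2 : t < ((j:ℝ)+1)/2^(Nat.digits 2 m).length) :
    walsh m t = ∏ i ∈ Finset.range (Nat.digits 2 m).length,
      ((-1:ℝ)^((j / 2^((Nat.digits 2 m).length - 1 - i)) : ℕ))^((Nat.digits 2 m).getD i 0) := by
  set L := (Nat.digits 2 m).length with hL
  unfold walsh
  rw [← hL]
  refine Finset.prod_congr rfl fun i hi => ?_
  have hiL : i < L := Finset.mem_range.mp hi
  have hpow : (2:ℝ)^(L-1-i) * 2^(i+1) = 2^L := by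
    rw [← pow_add]; congr 1; omega
  have hc : (0:ℝ) < 2^(L-1-i) := by positivity
  have hc2 : (0:ℝ) < 2^(i+1) := by positivity
  have hcL : (0:ℝ) < 2^L := by positivity
  have h1' : (j:ℝ)/2^(L-1-i) ≤ 2^(i+1) * t := by
    rw [div_le_iff₀ hc]
    calc (j:ℝ) = 2^(i+1) * ((j:ℝ)/2^L) * 2^(L-1-i) := by
          field_simp
          rw [← hpow]
          ring
      _ ≤ 2^(i+1) * t * 2^(L-1-i) := by
          have := mul_le_mul_of_nonneg_left h1 (le_of_lt hc2)
          exact mul_le_mul_of_nonneg_right this (le_of_lt hc)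
  have h2' : 2^(i+1) * t < ((j:ℝ)+1)/2^(L-1-i) := by
    rw [lt_div_iff₀ hc]
    calc 2^(i+1) * t * 2^(L-1-i) < 2^(i+1) * (((j:ℝ)+1)/2^L) * 2^(L-1-i) := by
          have := mul_lt_mul_of_pos_left h2 hc2
          exact mul_lt_mul_of_pos_right this hc
      _ = (j:ℝ)+1 := by
          field_simp
          rw [← hpow]
          ring
  rw [floor_div_pow (L-1-i) j _ h1' h2', zpow_natCast]

lemma digit_lt (m i : ℕ) : (Nat.digits 2 m).getD i 0 < 2 := by
  by_cases h : i < (Nat.digits 2 m).length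
  · rw [List.getD_eq_getElem _ 0 h]
    exact Nat.digits_lt_base (by norm_num) (List.getElem_mem _)
  · rw [List.getD_eq_default _ 0 (le_of_not_gt h)]
    norm_num

lemma list_sum_getD (l : List ℕ) : l.sum = ∑ i ∈ Finset.range l.length, l.getD i 0 := by
  induction l with
  | nil => simp
  | cons a l ih =>
      rw [List.sum_cons, List.length_cons, Finset.sum_range_succ']
      simp only [List.getD_cons_succ, List.getD_cons_zero]
      rw [← ih]
      ring

lemma card_S (m : ℕ) :
    ((Finset.range (Nat.digits 2 m).length).filter
      (fun i => (Nat.digits 2 m).getD ((Nat.digits 2 m).length - 1 - i) 0 = 1)).card = rank m := by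
  set l := Nat.digits 2 m with hl
  set L := l.length with hLdef
  rw [Finset.card_filter]
  have h1 : ∀ i ∈ Finset.range L, (if l.getD (L-1-i) 0 = 1 then 1 else 0) = l.getD (L-1-i) 0 := by
    intro i _
    have := digit_lt m (L-1-i)
    rw [← hl] at this
    split_ifs with h
    · omega
    · omega
  rw [Finset.sum_congr rfl h1, Finset.sum_range_reflect (fun i => l.getD i 0) L]
  exact (list_sum_getD l).symm

lemma walsh_eq_eps (m j : ℕ) (t : ℝ)
    (h1 : (j:ℝ)/2^(Nat.digits 2 m).length ≤ t)
    (h2 : t < ((j:ℝ)+1)/2^(Nat.digits 2 m).length) :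
    walsh m t = ∏ i ∈ (Finset.range (Nat.digits 2 m).length).filter
        (fun i => (Nat.digits 2 m).getD ((Nat.digits 2 m).length - 1 - i) 0 = 1),
      (-1:ℝ)^(j / 2^i) := by
  rw [walsh_eq_on m j t h1 h2]
  set l := Nat.digits 2 m with hl
  set L := l.length with hLdef
  have refl1 : ∏ i ∈ Finset.range L, ((-1:ℝ)^(j / 2^(L-1-i)))^(l.getD i 0)
      = ∏ i ∈ Finset.range L, ((-1:ℝ)^(j / 2^i))^(l.getD (L-1-i) 0) := by
    rw [← Finset.prod_range_reflect (fun i => ((-1:ℝ)^(j / 2^i))^(l.getD (L-1-i) 0)) L]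
    refine Finset.prod_congr rfl fun i hi => ?_
    have hiL : i < L := Finset.mem_range.mp hi
    have hidx : L-1-(L-1-i) = i := by omega
    rw [hidx]
  rw [refl1, Finset.prod_filter]
  refine Finset.prod_congr rfl fun i hi => ?_
  have hd : l.getD (L-1-i) 0 < 2 := by
    have := digit_lt m (L-1-i); rw [← hl] at this; exact this
  by_cases h : l.getD (L-1-i) 0 = 1
  · rw [if_pos h, h, pow_one]
  · rw [if_neg h]
    have h0 : l.getD (L-1-i) 0 = 0 := by omega
    rw [h0, pow_zero]

set_option maxHeartbeats 1000000 in
/-- a Walsh function of rank `r` annihilates all monomials (hence all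
polynomials) of degree less than `r`: `∫_0^1 t^k w_m(t) dt = 0` for `0 ≤ k < r(m)`. -/
theorem walsh_annihilates_polynomials (m k : ℕ) (hk : k < rank m) :
    ∫ t in (0:ℝ)..1, t ^ k * walsh m t = 0 := by
  classical
  set L := (Nat.digits 2 m).length with hLdef
  set S : Finset ℕ := (Finset.range L).filter
      (fun i => (Nat.digits 2 m).getD (L - 1 - i) 0 = 1) with hSdef
  have hcard : S.card = rank m := card_S m
  have hcL : (0:ℝ) < 2^L := by positivity
  set a : ℕ → ℝ := fun i => (i:ℝ) / 2^L with ha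
  have hmono : ∀ i : ℕ, a i ≤ a (i+1) := by
    intro i
    apply div_le_div_of_nonneg_right ?_ hcL.le
    · push_cast; linarith
  set ε : ℕ → ℝ := fun j => ∏ i ∈ S, (-1:ℝ)^(j / 2^i) with hε
  have hwalsh : ∀ j : ℕ, ∀ t ∈ Set.Ico (a j) (a (j+1)), walsh m t = ε j := by
    intro j t ht
    have h1 : (j:ℝ)/2^L ≤ t := ht.1
    have h2 : t < ((j:ℝ)+1)/2^L := by
      have := ht.2
      rw [ha] at this
      push_cast at this
      exact this
    exact walsh_eq_eps m j t h1 h2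
  have hae : ∀ j : ℕ, ∀ᵐ t ∂(volume : Measure ℝ),
      t ∈ Set.uIoc (a j) (a (j+1)) → t^k * walsh m t = ε j * t^k := by
    intro j
    have hne : ∀ᵐ t : ℝ ∂volume, t ≠ a (j+1) := by
      rw [MeasureTheory.ae_iff]
      have hset : {t : ℝ | ¬ t ≠ a (j+1)} = {a (j+1)} := by ext t; simp
      rw [hset]
      exact Real.volume_singleton
    filter_upwards [hne] with t ht hmem
    rw [Set.uIoc_of_le (hmono j)] at hmem
    have htm : t ∈ Set.Ico (a j) (a (j+1)) := ⟨le_of_lt hmem.1, lt_of_le_of_ne hmem.2 ht⟩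
    rw [hwalsh j t htm]
    ring
  have hint : ∀ j : ℕ, IntervalIntegrable (fun t => t^k * walsh m t) volume (a j) (a (j+1)) := by
    intro j
    have hg : IntervalIntegrable (fun t => ε j * t^k) volume (a j) (a (j+1)) :=
      (Continuous.intervalIntegrable (by continuity) _ _)
    rw [intervalIntegrable_iff] at hg ⊢
    refine hg.congr ?_
    have := (MeasureTheory.ae_restrict_iff' measurableSet_uIoc).2 (hae j)
    filter_upwards [this] with t ht
    exact ht.symm
  have hieq : ∀ j : ℕ, (∫ t in (a j)..(a (j+1)), t^k * walsh m t)
      = ε j * (((a (j+1))^(k+1) - (a j)^(k+1)) / (k+1)) := by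
    intro j
    rw [intervalIntegral.integral_congr_ae (hae j), intervalIntegral.integral_const_mul,
      integral_pow]
  have hsum := intervalIntegral.sum_integral_adjacent_intervals
    (f := fun t => t^k * walsh m t) (μ := volume) (a := a) (n := 2^L) (fun i _ => hint i)
  have ha0 : a 0 = 0 := by simp [ha]
  have haN : a (2^L) = 1 := by
    rw [ha]
    push_cast
    exact div_self (ne_of_gt hcL)
  have hgoal : (∫ t in (0:ℝ)..1, t^k * walsh m t)
      = ∑ j ∈ Finset.range (2^L), ∫ t in (a j)..(a (j+1)), t^k * walsh m t := by
    rw [hsum, ha0, haN]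
  rw [hgoal]
  set P : ℝ[X] := (X + C 1)^(k+1) - X^(k+1) with hP
  have hdegP : P.degree < (S.card : WithBot ℕ) := by
    have h1 : ((X + C 1 : ℝ[X])^(k+1)).degree = ((X : ℝ[X])^(k+1)).degree := by
      rw [Polynomial.degree_pow, Polynomial.degree_pow, Polynomial.degree_X_add_C, Polynomial.degree_X]
    have h2 : ((X + C 1 : ℝ[X])^(k+1)) ≠ 0 := ((Polynomial.monic_X_add_C 1).pow _).ne_zero
    have h3 : ((X + C 1 : ℝ[X])^(k+1)).leadingCoeff = ((X : ℝ[X])^(k+1)).leadingCoeff := by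
      rw [((Polynomial.monic_X_add_C (1:ℝ)).pow _).leadingCoeff, (Polynomial.monic_X_pow _).leadingCoeff]
    have h4 := Polynomial.degree_sub_lt h1 h2 h3
    have h5 : ((X + C 1 : ℝ[X])^(k+1)).degree = ((k+1 : ℕ) : WithBot ℕ) := by
      rw [Polynomial.degree_pow, Polynomial.degree_X_add_C]
      simp [nsmul_eq_mul]
    rw [h5] at h4
    refine lt_of_lt_of_le h4 ?_
    have h6 : k + 1 ≤ S.card := by omega
    exact_mod_cast h6
  have hkey := key_s13 L S (Finset.filter_subset _ _) P hdegP
  have hevalP : ∀ j : ℕ, P.eval (j:ℝ) = ((j:ℝ)+1)^(k+1) - (j:ℝ)^(k+1) := by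
    intro j
    rw [hP]
    simp only [Polynomial.eval_sub, Polynomial.eval_pow, Polynomial.eval_add,
      Polynomial.eval_X, Polynomial.eval_C]
  have hterm : ∀ j ∈ Finset.range (2^L), (∫ t in (a j)..(a (j+1)), t^k * walsh m t)
      = (ε j * P.eval (j:ℝ)) * (1 / (((k:ℝ)+1) * (2^L)^(k+1))) := by
    intro j _
    rw [hieq j, hevalP j, ha, mul_assoc]
    congr 1
    have hk1 : ((k:ℝ)+1) ≠ 0 := by positivity
    have h2L : ((2:ℝ)^L) ≠ 0 := ne_of_gt hcL
    push_cast
    simp only [div_pow, one_div, mul_inv]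
    ring
  rw [Finset.sum_congr rfl hterm, ← Finset.sum_mul, hkey, zero_mul]
end
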